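/- If Ψ ∈ S(ℝ^{n+k}) is nonzero and satisfies ÃΨ = λΨ for some λ ∈ ℂ, then there exists χ ∈ S(ℝᵏ) such that T*_{Ŝ,χ}Ψ ≠ 0; consequently λ is an eigenvalue of A, with eigenfunction T*_{Ŝ,χ}Ψ ∈ S(ℝⁿ). In particular the eigenvalues of A and of Ã coincide. -/

import Mathlib

open MeasureTheory Complex SchwartzMap
open scoped ComplexConjugate

/-- If `Ψ ∈ S(ℝ^{n+k})` is nonzero and `ÃΨ = λΨ`, then there exists
`χ ∈ S(ℝᵏ)` with `T*_{Ŝ,χ}Ψ ≠ 0`; consequently `λ` is an eigenvalue of `A` with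
eigenfunction `T*_{Ŝ,χ}Ψ ∈ S(ℝⁿ)`. (Together with the converse direction this shows
that the eigenvalues of `A` and `Ã` coincide.) -/
theorem stmt6 (n k : ℕ) (hn : 0 < n) (hk : 0 < k)
    -- `Ŝ` : a unitary operator mapping `S(ℝ^{n+k})` into itself, together with `Ŝ⁻¹`
    (Sh : 𝓢((Fin n → ℝ) × (Fin k → ℝ), ℂ) ≃L[ℂ] 𝓢((Fin n → ℝ) × (Fin k → ℝ), ℂ))
    -- unitarity of `Ŝ` (preservation of the `L²` inner product)
    (hSh : ∀ Φ Ψ : 𝓢((Fin n → ℝ) × (Fin k → ℝ), ℂ),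
      ∫ p, conj (Sh Φ p) * Sh Ψ p = ∫ p, conj (Φ p) * Ψ p)
    -- the adjoint intertwiners `T*_{Ŝ,χ}`, mapping `S(ℝ^{n+k})` into `S(ℝⁿ)`:
    (Tstar : 𝓢(Fin k → ℝ, ℂ) → 𝓢((Fin n → ℝ) × (Fin k → ℝ), ℂ) → 𝓢(Fin n → ℝ, ℂ))
    -- `(T*_{Ŝ,χ}Φ)(x) = ∫ conj(χ(y)) (ŜΦ)(x,y) dy`
    (hTstar : ∀ (χ : 𝓢(Fin k → ℝ, ℂ)) (Φ : 𝓢((Fin n → ℝ) × (Fin k → ℝ), ℂ))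
      (x : Fin n → ℝ), Tstar χ Φ x = ∫ y : Fin k → ℝ, conj (χ y) * Sh Φ (x, y))
    (A : 𝓢(Fin n → ℝ, ℂ) →L[ℂ] 𝓢(Fin n → ℝ, ℂ))
    (Atil : 𝓢((Fin n → ℝ) × (Fin k → ℝ), ℂ) →L[ℂ] 𝓢((Fin n → ℝ) × (Fin k → ℝ), ℂ))
    -- the intertwining relation `T*_{Ŝ,χ} ∘ Ã = A ∘ T*_{Ŝ,χ}`
    (hint : ∀ (χ : 𝓢(Fin k → ℝ, ℂ)) (Φ : 𝓢((Fin n → ℝ) × (Fin k → ℝ), ℂ)),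
      Tstar χ (Atil Φ) = A (Tstar χ Φ))
    (Ψ : 𝓢((Fin n → ℝ) × (Fin k → ℝ), ℂ)) (hΨ : Ψ ≠ 0) (lam : ℂ)
    (heig : Atil Ψ = lam • Ψ) :
    ∃ χ : 𝓢(Fin k → ℝ, ℂ), Tstar χ Ψ ≠ 0 ∧ A (Tstar χ Ψ) = lam • Tstar χ Ψ := by
  classical
  -- `Φ := Sh Ψ` is nonzero
  have hΦ : Sh Ψ ≠ 0 := by
    intro h
    exact hΨ (by simpa using Sh.injective (by simpa using h))
  obtain ⟨p₀, hp₀⟩ : ∃ p, Sh Ψ p ≠ 0 := by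
    by_contra h
    push_neg at h
    exact hΦ (SchwartzMap.ext fun p => by simpa using h p)
  obtain ⟨x₀, y₀⟩ := p₀
  -- the slice map `g y = (x₀, y)` has temperate growth
  have hg : Function.HasTemperateGrowth
      (fun y : Fin k → ℝ => ((x₀, y) : (Fin n → ℝ) × (Fin k → ℝ))) := by
    apply Function.HasTemperateGrowth.of_fderiv (k := 1) (C := 1 + ‖x₀‖)
    · have hd : (fderiv ℝ (fun y : Fin k → ℝ => ((x₀, y) : (Fin n → ℝ) × (Fin k → ℝ)))) =
        fun _ => ContinuousLinearMap.inr ℝ (Fin n → ℝ) (Fin k → ℝ) := by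
        ext1 y
        exact (hasFDerivAt_prodMk_right x₀ y).fderiv
      rw [hd]
      exact .const _
    · exact (differentiable_const x₀).prodMk differentiable_id
    · intro y
      have h1 : ‖((x₀, y) : (Fin n → ℝ) × (Fin k → ℝ))‖ ≤ ‖x₀‖ + ‖y‖ := by
        rw [Prod.norm_def]
        exact max_le (le_add_of_nonneg_right (norm_nonneg _))
          (le_add_of_nonneg_left (norm_nonneg _))
      have : (0:ℝ) ≤ ‖x₀‖ := norm_nonneg _
      have h2 : (0:ℝ) ≤ ‖y‖ := norm_nonneg _
      nlinarith [h1]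
  have hg_upper : ∃ (K : ℕ) (C : ℝ), ∀ y : Fin k → ℝ,
      ‖y‖ ≤ C * (1 + ‖((x₀, y) : (Fin n → ℝ) × (Fin k → ℝ))‖) ^ K := by
    refine ⟨1, 1, fun y => ?_⟩
    have h1 : ‖y‖ ≤ ‖((x₀, y) : (Fin n → ℝ) × (Fin k → ℝ))‖ :=
      norm_snd_le ((x₀, y) : (Fin n → ℝ) × (Fin k → ℝ))
    calc ‖y‖ ≤ ‖((x₀, y) : (Fin n → ℝ) × (Fin k → ℝ))‖ := h1
      _ ≤ 1 * (1 + ‖((x₀, y) : (Fin n → ℝ) × (Fin k → ℝ))‖) ^ 1 := by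
          have := norm_nonneg ((x₀, y) : (Fin n → ℝ) × (Fin k → ℝ))
          simpa using by linarith
  -- define `χ(y) = (Sh Ψ)(x₀, y)`
  set χ : 𝓢(Fin k → ℝ, ℂ) := SchwartzMap.compCLM ℂ hg hg_upper (Sh Ψ) with hχdef
  have hχ : ∀ y, χ y = Sh Ψ (x₀, y) := fun y => rfl
  refine ⟨χ, ?_, ?_⟩
  · -- `T*_{Ŝ,χ}Ψ ≠ 0`
    intro h0
    have hval : Tstar χ Ψ x₀ = ∫ y : Fin k → ℝ, conj (χ y) * Sh Ψ (x₀, y) := hTstar χ Ψ x₀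
    have hval2 : Tstar χ Ψ x₀ = ((∫ y : Fin k → ℝ, Complex.normSq (χ y) : ℝ) : ℂ) := by
      have hio : ∫ y : Fin k → ℝ, ((Complex.normSq (χ y) : ℝ) : ℂ) =
          ((∫ y : Fin k → ℝ, Complex.normSq (χ y) : ℝ) : ℂ) := integral_ofReal
      rw [hval, ← hio]
      congr 1
      ext y
      rw [← hχ y, Complex.normSq_eq_conj_mul_self]
    have hnonneg : ∀ y : Fin k → ℝ, 0 ≤ Complex.normSq (χ y) := fun y => Complex.normSq_nonneg _
    have hintg : Integrable (fun y : Fin k → ℝ => Complex.normSq (χ y)) := by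
      have h1 : Integrable (fun y : Fin k → ℝ => χ y) := χ.integrable
      have h2 : Integrable (fun y : Fin k → ℝ => ‖χ y‖) := h1.norm
      have h3 : Integrable (fun y : Fin k → ℝ => ‖χ y‖ * ‖χ y‖) := by
        refine h2.bdd_mul (c := (SchwartzMap.seminorm ℝ 0 0) χ) ?_ ?_
        · exact (continuous_norm.comp χ.continuous).aestronglyMeasurable
        · exact Filter.Eventually.of_forall fun y => by
            simpa using norm_le_seminorm ℝ χ y
      have h4 : (fun y : Fin k → ℝ => Complex.normSq (χ y)) =
          fun y : Fin k → ℝ => ‖χ y‖ * ‖χ y‖ := by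
        ext y
        rw [Complex.normSq_eq_norm_sq, sq]
      rw [h4]; exact h3
    have hpos : 0 < ∫ y : Fin k → ℝ, Complex.normSq (χ y) := by
      rw [integral_pos_iff_support_of_nonneg hnonneg hintg]
      have hcont : Continuous fun y : Fin k → ℝ => Complex.normSq (χ y) :=
        Complex.continuous_normSq.comp χ.continuous
      have hopen : IsOpen (Function.support fun y : Fin k → ℝ => Complex.normSq (χ y)) := by
        rw [Function.support_eq_preimage]
        exact isOpen_compl_singleton.preimage hcont
      have hmem : y₀ ∈ Function.support fun y : Fin k → ℝ => Complex.normSq (χ y) := by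
        simp only [Function.mem_support]
        rw [hχ y₀]
        simpa [Complex.normSq_eq_zero] using hp₀
      exact hopen.measure_pos volume ⟨y₀, hmem⟩
    have : Tstar χ Ψ x₀ = 0 := by rw [h0]; rfl
    rw [hval2] at this
    exact absurd (Complex.ofReal_eq_zero.mp this) (ne_of_gt hpos)
  · -- eigenvalue equation
    have h2 : Tstar χ (lam • Ψ) = lam • Tstar χ Ψ := by
      ext x
      rw [SchwartzMap.smul_apply, hTstar, hTstar, _root_.map_smul]
      simp_rw [SchwartzMap.smul_apply, smul_eq_mul, mul_left_comm (conj (χ _)) lam]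
      rw [← smul_eq_mul, ← integral_smul]
      simp [smul_eq_mul]
    calc A (Tstar χ Ψ) = Tstar χ (Atil Ψ) := (hint χ Ψ).symm
      _ = lam • Tstar χ Ψ := by rw [heig, h2]
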